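/- Let k, g ≥ 2. If 𝒜 is a family of k-element subsets of {1,…,N} such that every set S of integers has at most g representations as a sumset A + B with A, B ∈ 𝒜 (counting unordered multisets {A,B}), then |𝒜| ≤ C_k · √g · N^{k - 1/2} for some constant C_k depending only on k. -/

import Mathlib

open Finset Pointwise

private lemma add_sing (s : Finset ℤ) (a : ℤ) : s + {a} = s.image (· + a) := by
  ext x
  simp only [Finset.mem_add, Finset.mem_singleton, Finset.mem_image]
  constructor
  · rintro ⟨y, hy, z, rfl, rfl⟩; exact ⟨y, hy, rfl⟩
  · rintro ⟨y, hy, rfl⟩; exact ⟨y, hy, a, rfl, rfl⟩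

private lemma b2g_normalize_eq (A : Finset ℤ) (hA : A.Nonempty) :
    A = insert (0:ℤ) ((A.erase (A.min' hA)).image (· - A.min' hA)) + {A.min' hA} := by
  set a := A.min' hA with ha
  rw [add_sing, Finset.image_insert, Finset.image_image]
  have h1 : ((· + a) ∘ (· - a)) = (id : ℤ → ℤ) := by funext x; simp
  rw [h1, Finset.image_id, zero_add, Finset.insert_erase (A.min'_mem hA)]

private lemma key_count (k g N : ℕ) (hk : 2 ≤ k) (𝒜 : Finset (Finset ℤ))
    (h𝒜 : ∀ A ∈ 𝒜, A ⊆ Finset.Icc (1 : ℤ) N ∧ A.card = k)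
    (hB2 : ∀ S : Finset ℤ,
        (((𝒜 ×ˢ 𝒜).filter (fun p : Finset ℤ × Finset ℤ => p.1 + p.2 = S)).image
          (fun p : Finset ℤ × Finset ℤ => Sym2.mk p.1 p.2)).card ≤ g) :
    𝒜.card ^ 2 ≤ 4 * g * N ^ (2 * k - 1) := by
  classical
  set T : Finset (Finset ℤ) := (𝒜 ×ˢ 𝒜).image (fun p => p.1 + p.2) with hT
  -- Step 1: (𝒜 ×ˢ 𝒜).card ≤ 2g * T.card
  have step1 : (𝒜 ×ˢ 𝒜).card ≤ (2 * g) * T.card := by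
    apply Finset.card_le_mul_card_image
    intro S _
    set F := (𝒜 ×ˢ 𝒜).filter (fun p => p.1 + p.2 = S) with hF
    have hfib : ∀ z ∈ F.image (fun p => Sym2.mk p.1 p.2),
        (F.filter (fun p => Sym2.mk p.1 p.2 = z)).card ≤ 2 := by
      intro z hz
      obtain ⟨q, _, rfl⟩ := Finset.mem_image.mp hz
      have hsub : F.filter (fun p => Sym2.mk p.1 p.2 = Sym2.mk q.1 q.2) ⊆ {q, q.swap} := by
        intro p hp
        have := (Finset.mem_filter.mp hp).2
        rcases Sym2.mk_eq_mk_iff.mp this with h | h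
        · simp [h]
        · simp [h]
      calc (F.filter (fun p => Sym2.mk p.1 p.2 = Sym2.mk q.1 q.2)).card
          ≤ ({q, q.swap} : Finset ((Finset ℤ) × (Finset ℤ))).card := Finset.card_le_card hsub
        _ ≤ 2 := Finset.card_insert_le _ _ |>.trans (by simp)
    have h1 : F.card ≤ 2 * (F.image (fun p => Sym2.mk p.1 p.2)).card :=
      Finset.card_le_mul_card_image F 2 hfib
    have h2 := hB2 S
    rw [← hF] at h2
    calc F.card ≤ 2 * (F.image (fun p => Sym2.mk p.1 p.2)).card := h1
      _ ≤ 2 * g := by omega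
  -- Step 2: T.card ≤ 2N * (N^(k-1))^2
  have step2 : T.card ≤ 2 * N * (N ^ (k-1) * N ^ (k-1)) := by
    set P : Finset (Finset ℤ) := Finset.powersetCard (k-1) (Finset.Icc (1:ℤ) N) with hP
    set ψ : ℤ × Finset ℤ × Finset ℤ → Finset ℤ :=
      fun q => insert (0:ℤ) q.2.1 + insert (0:ℤ) q.2.2 + {q.1} with hψ
    have hsub : T ⊆ (Finset.Icc (2:ℤ) (2*N) ×ˢ (P ×ˢ P)).image ψ := by
      intro S hS
      obtain ⟨⟨A, B⟩, hAB, rfl⟩ := Finset.mem_image.mp hS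
      rw [Finset.mem_product] at hAB
      obtain ⟨hAsub, hAcard⟩ := h𝒜 A hAB.1
      obtain ⟨hBsub, hBcard⟩ := h𝒜 B hAB.2
      have hAne : A.Nonempty := Finset.card_pos.mp (by omega)
      have hBne : B.Nonempty := Finset.card_pos.mp (by omega)
      set a := A.min' hAne with hadef
      set b := B.min' hBne with hbdef
      have haA : a ∈ A := A.min'_mem hAne
      have hbB : b ∈ B := B.min'_mem hBne
      have haI := hAsub haA
      have hbI := hBsub hbB
      rw [Finset.mem_Icc] at haI hbI
      -- normalized sets
      set A' := (A.erase a).image (· - a) with hA'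
      set B' := (B.erase b).image (· - b) with hB'
      refine Finset.mem_image.mpr ⟨(a + b, A', B'), ?_, ?_⟩
      · rw [Finset.mem_product, Finset.mem_product]
        refine ⟨Finset.mem_Icc.mpr ⟨by omega, by push_cast; omega⟩, ?_, ?_⟩
        · rw [hP, Finset.mem_powersetCard]
          constructor
          · intro x hx
            obtain ⟨y, hy, rfl⟩ := Finset.mem_image.mp hx
            have hyA : y ∈ A := Finset.mem_of_mem_erase hy
            have hyne : y ≠ a := Finset.ne_of_mem_erase hy
            have hymin : a ≤ y := A.min'_le y hyA
            have hyI := hAsub hyA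
            rw [Finset.mem_Icc] at hyI ⊢
            omega
          · rw [Finset.card_image_of_injective _ (sub_left_injective),
              Finset.card_erase_of_mem haA, hAcard]
        · rw [hP, Finset.mem_powersetCard]
          constructor
          · intro x hx
            obtain ⟨y, hy, rfl⟩ := Finset.mem_image.mp hx
            have hyB : y ∈ B := Finset.mem_of_mem_erase hy
            have hyne : y ≠ b := Finset.ne_of_mem_erase hy
            have hymin : b ≤ y := B.min'_le y hyB
            have hyI := hBsub hyB
            rw [Finset.mem_Icc] at hyI ⊢
            omega
          · rw [Finset.card_image_of_injective _ (sub_left_injective),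
              Finset.card_erase_of_mem hbB, hBcard]
      · show insert (0:ℤ) A' + insert (0:ℤ) B' + {a + b} = A + B
        have e1 : A = insert (0:ℤ) A' + {a} := b2g_normalize_eq A hAne
        have e2 : B = insert (0:ℤ) B' + {b} := b2g_normalize_eq B hBne
        rw [e1, e2]
        rw [add_add_add_comm, Finset.singleton_add_singleton]
    have hcard : T.card ≤ ((Finset.Icc (2:ℤ) (2*N) ×ˢ (P ×ˢ P)).image ψ).card :=
      Finset.card_le_card hsub
    have hcard2 : ((Finset.Icc (2:ℤ) (2*N) ×ˢ (P ×ˢ P)).image ψ).card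
        ≤ (Finset.Icc (2:ℤ) (2*N)).card * (P.card * P.card) := by
      refine (Finset.card_image_le).trans ?_
      rw [Finset.card_product, Finset.card_product]
    have hIcc : (Finset.Icc (2:ℤ) (2*N)).card ≤ 2 * N := by
      rw [Int.card_Icc]; omega
    have hPcard : P.card ≤ N ^ (k-1) := by
      rw [hP, Finset.card_powersetCard]
      have : (Finset.Icc (1:ℤ) N).card = N := by
        rw [Int.card_Icc]; omega
      rw [this]
      exact Nat.choose_le_pow N (k-1)
    calc T.card ≤ (Finset.Icc (2:ℤ) (2*N)).card * (P.card * P.card) := hcard.trans hcard2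
      _ ≤ 2 * N * (N ^ (k-1) * N ^ (k-1)) := by
          exact Nat.mul_le_mul hIcc (Nat.mul_le_mul hPcard hPcard)
  -- combine
  have hNpow : N * (N ^ (k-1) * N ^ (k-1)) = N ^ (2*k - 1) := by
    rw [← pow_add, ← pow_succ']
    congr 1
    omega
  have : 𝒜.card * 𝒜.card ≤ 2 * g * (2 * N * (N ^ (k-1) * N ^ (k-1)))  := by
    rw [← Finset.card_product]
    exact step1.trans (Nat.mul_le_mul_left _ step2)
  calc 𝒜.card ^ 2 = 𝒜.card * 𝒜.card := by ring
    _ ≤ 2 * g * (2 * N * (N ^ (k-1) * N ^ (k-1))) := this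
    _ = 4 * g * (N * (N ^ (k-1) * N ^ (k-1))) := by ring
    _ = 4 * g * N ^ (2*k-1) := by rw [hNpow]

theorem B2g_system_upper (k : ℕ) (hk : 2 ≤ k) :
    ∃ C : ℝ, 0 < C ∧ ∀ (g N : ℕ), 2 ≤ g → ∀ 𝒜 : Finset (Finset ℤ),
      (∀ A ∈ 𝒜, A ⊆ Finset.Icc (1 : ℤ) N ∧ A.card = k) →
      (∀ S : Finset ℤ,
        (((𝒜 ×ˢ 𝒜).filter (fun p : Finset ℤ × Finset ℤ => p.1 + p.2 = S)).image
          (fun p : Finset ℤ × Finset ℤ => Sym2.mk p.1 p.2)).card ≤ g) →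
      (𝒜.card : ℝ) ≤ C * Real.sqrt g * (N : ℝ) ^ ((k : ℝ) - 1 / 2) := by
  refine ⟨2, by norm_num, ?_⟩
  intro g N hg 𝒜 h𝒜 hB2
  rcases Nat.eq_zero_or_pos N with rfl | hN
  · -- N = 0 : 𝒜 is empty
    have : 𝒜 = ∅ := by
      rw [Finset.eq_empty_iff_forall_notMem]
      intro A hA
      obtain ⟨hsub, hcard⟩ := h𝒜 A hA
      have : A = ∅ := by
        rw [Finset.eq_empty_iff_forall_notMem]
        intro x hx
        have := hsub hx
        simp at this
      rw [this] at hcard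
      simp at hcard
      omega
    rw [this]
    simp only [Finset.card_empty, Nat.cast_zero]
    positivity
  · have key := key_count k g N hk 𝒜 h𝒜 hB2
    have hNR : (0:ℝ) < N := by exact_mod_cast hN
    have hcast : (𝒜.card : ℝ) ^ 2 ≤ 4 * g * (N:ℝ) ^ (2*k-1 : ℕ) := by
      exact_mod_cast key
    have hrhs_sq : (2 * Real.sqrt g * (N : ℝ) ^ ((k : ℝ) - 1 / 2)) ^ 2
        = 4 * g * (N:ℝ) ^ (2*k-1 : ℕ) := by
      rw [mul_pow, mul_pow, Real.sq_sqrt (by positivity)]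
      rw [← Real.rpow_natCast ((N:ℝ) ^ ((k : ℝ) - 1 / 2)) 2,
        ← Real.rpow_mul (le_of_lt hNR)]
      have h1 : ((k : ℝ) - 1 / 2) * (2:ℕ) = ((2*k-1 : ℕ) : ℝ) := by
        push_cast [Nat.cast_sub (by omega : 1 ≤ 2*k)]
        ring
      rw [h1, Real.rpow_natCast]
      norm_num
    have hrhs_nonneg : 0 ≤ 2 * Real.sqrt g * (N : ℝ) ^ ((k : ℝ) - 1 / 2) := by
      positivity
    nlinarith [(Nat.cast_nonneg 𝒜.card : (0:ℝ) ≤ (𝒜.card:ℝ)), hcast, hrhs_sq,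
      sq_nonneg ((𝒜.card : ℝ) - 2 * Real.sqrt g * (N : ℝ) ^ ((k : ℝ) - 1 / 2))]
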